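/- For a forest T_v rooted at a hypernode v with S(v) nonempty and Cost(T_v) > 0 (and Cost(T_w) > 0 for all w ∈ H(v)), the squared coefficient of variation of the SEI estimate satisfies: CV²(|v|·C_SEI(T_v)) = Σ_{w ∈ H(v)} [ 1 / C(|S(v)|−1, |w|−1) ] · [ r(S(v)) / r(w) ] · ( Cost(T_w) / Cost(T_v) )² · ( CV²(|w|·C_SEI(T_w)) + 1 ) − ( Cost(T_{S(v)}) / Cost(T_v) )². (Paper's Corollary 1.) -/

import Mathlib

open Finset

/-- A finite rooted tree on a finite node type `V`.  The root is its own parent,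
every non-root node has a parent whose depth is one smaller, and the root is the
unique node of depth `0`. -/
structure FinRootedTree (V : Type) [Fintype V] [DecidableEq V] where
  root : V
  parent : V → V
  depth : V → ℕ
  depth_root : depth root = 0
  parent_root : parent root = root
  depth_parent : ∀ v, v ≠ root → depth (parent v) + 1 = depth v
  eq_root_of_depth_zero : ∀ v, depth v = 0 → v = root

namespace FinRootedTree

variable {V : Type} [Fintype V] [DecidableEq V]

/-- The set of children of a node. -/
def children (T : FinRootedTree V) (x : V) : Finset V :=
  Finset.univ.filter fun w => w ≠ T.root ∧ T.parent w = x

/-- `S(v)`: the set of all children of nodes of a hypernode `v`. -/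
def succs (T : FinRootedTree V) (v : Finset V) : Finset V :=
  v.biUnion T.children

/-- The set of nodes of the subtree rooted at `x` (the descendants of `x`,
including `x` itself). -/
def desc (T : FinRootedTree V) (x : V) : Finset V :=
  Finset.univ.filter fun w =>
    x ∈ (Finset.range (T.depth w + 1)).image fun k => T.parent^[k] w

/-- `Cost(T_x)`: the total cost of the subtree rooted at `x`. -/
noncomputable def subtreeCost (T : FinRootedTree V) (c : V → ℝ) (x : V) : ℝ :=
  ∑ w ∈ T.desc x, c w

/-- `Cost(T_v)`: the total cost of the forest rooted at the hypernode `v`. -/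
noncomputable def forestCost (T : FinRootedTree V) (c : V → ℝ) (v : Finset V) : ℝ :=
  ∑ x ∈ v, T.subtreeCost c x

/-- `H(v)`: the hyperchildren of `v` for budget `B`, i.e. the subsets of `S(v)`
of size `min B |S(v)|`. -/
def hyper (T : FinRootedTree V) (B : ℕ) (v : Finset V) : Finset (Finset V) :=
  (T.succs v).powersetCard (min B (T.succs v).card)

/-- A hypernode: a nonempty set of distinct nodes, all at the same depth. -/
def IsHypernode (T : FinRootedTree V) (v : Finset V) : Prop :=
  v.Nonempty ∧ ∀ a ∈ v, ∀ b ∈ v, T.depth a = T.depth b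

/-- Expectation functional of the SEI estimator `C_SEI(T_v)` (with importance
function `r`): `seiE T c B r fuel v g` is `E[g(C_SEI(T_v))]`, defined by the
recursion of Algorithm 2, where the hypernode `w` is drawn from `H(v)` with
probability `r(w) / (r(S(v)) * C(|S(v)|-1, |w|-1))`, with enough fuel to reach
the leaves. -/
noncomputable def seiE (T : FinRootedTree V) (c : V → ℝ) (B : ℕ)
    (r : V → ℝ) : ℕ → Finset V → (ℝ → ℝ) → ℝ
  | 0, v, g => g ((∑ x ∈ v, c x) / (v.card : ℝ))
  | fuel + 1, v, g =>
      if T.succs v = ∅ then g ((∑ x ∈ v, c x) / (v.card : ℝ))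
      else
        ∑ w ∈ T.hyper B v,
          ((∑ a ∈ w, r a) /
              ((∑ a ∈ T.succs v, r a) *
                ((((T.succs v).card - 1).choose (w.card - 1) : ℕ) : ℝ))) *
            seiE T c B r fuel w fun y =>
              g ((∑ x ∈ v, c x) / (v.card : ℝ) +
                ((w.card : ℝ) / (v.card : ℝ)) *
                  ((∑ a ∈ T.succs v, r a) / (∑ a ∈ w, r a)) * y)

/-- `Var(|v| * C_SEI(T_v))`. -/
noncomputable def seiVar (T : FinRootedTree V) (c : V → ℝ) (B : ℕ) (r : V → ℝ)
    (fuel : ℕ) (v : Finset V) : ℝ :=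
  seiE T c B r fuel v (fun y => ((v.card : ℝ) * y) ^ 2) -
    (seiE T c B r fuel v fun y => (v.card : ℝ) * y) ^ 2

/-- `CV²(|v| * C_SEI(T_v)) = Var(|v| * C_SEI(T_v)) / E[|v| * C_SEI(T_v)]²`. -/
noncomputable def seiCV2 (T : FinRootedTree V) (c : V → ℝ) (B : ℕ) (r : V → ℝ)
    (fuel : ℕ) (v : Finset V) : ℝ :=
  seiVar T c B r fuel v /
    (seiE T c B r fuel v fun y => (v.card : ℝ) * y) ^ 2

lemma depth_iterate (T : FinRootedTree V) (w : V) :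
    ∀ k, k ≤ T.depth w → T.depth (T.parent^[k] w) = T.depth w - k := by
  intro k
  induction k with
  | zero => simp
  | succ k ih =>
    intro hk
    have hk' : k ≤ T.depth w := Nat.le_of_succ_le hk
    have h1 := ih hk'
    have hpos : 0 < T.depth (T.parent^[k] w) := by omega
    have hne : T.parent^[k] w ≠ T.root := by
      intro h; rw [h, T.depth_root] at hpos; omega
    have := T.depth_parent _ hne
    rw [Function.iterate_succ_apply']
    omega

lemma depth_lt_card (T : FinRootedTree V) (w : V) : T.depth w < Fintype.card V := by
  have hinj : Function.Injective (fun k : Fin (T.depth w + 1) => T.parent^[(k : ℕ)] w) := by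
    intro a b hab
    have ha := T.depth_iterate w a (Nat.lt_succ_iff.mp a.2)
    have hb := T.depth_iterate w b (Nat.lt_succ_iff.mp b.2)
    simp only at hab
    rw [hab] at ha
    have : (a : ℕ) = b := by omega
    exact Fin.ext this
  have := Fintype.card_le_of_injective _ hinj
  simpa using this

lemma mem_desc {T : FinRootedTree V} {x w : V} :
    w ∈ T.desc x ↔ ∃ k ≤ T.depth w, T.parent^[k] w = x := by
  simp only [desc, Finset.mem_filter, Finset.mem_univ, true_and, Finset.mem_image,
    Finset.mem_range]
  constructor
  · rintro ⟨k, hk, h⟩; exact ⟨k, by omega, h⟩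
  · rintro ⟨k, hk, h⟩; exact ⟨k, by omega, h⟩

lemma self_mem_desc {T : FinRootedTree V} (x : V) : x ∈ T.desc x :=
  mem_desc.mpr ⟨0, Nat.zero_le _, rfl⟩

lemma depth_le_of_mem_desc {T : FinRootedTree V} {x w : V} (h : w ∈ T.desc x) :
    T.depth x ≤ T.depth w := by
  obtain ⟨k, hk, rfl⟩ := mem_desc.mp h
  rw [T.depth_iterate w k hk]; omega

lemma mem_children {T : FinRootedTree V} {x y : V} :
    y ∈ T.children x ↔ y ≠ T.root ∧ T.parent y = x := by
  simp [children]

lemma depth_of_mem_children {T : FinRootedTree V} {x y : V} (h : y ∈ T.children x) :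
    T.depth y = T.depth x + 1 := by
  obtain ⟨h1, h2⟩ := mem_children.mp h
  have := T.depth_parent y h1
  rw [h2] at this; omega

lemma desc_eq (T : FinRootedTree V) (x : V) :
    T.desc x = insert x ((T.children x).biUnion T.desc) := by
  classical
  ext w
  simp only [Finset.mem_insert, Finset.mem_biUnion]
  constructor
  · intro hw
    obtain ⟨k, hk, hkx⟩ := mem_desc.mp hw
    have hex : ∃ k, k ≤ T.depth w ∧ T.parent^[k] w = x := ⟨k, hk, hkx⟩
    obtain ⟨hm1, hm2⟩ := Nat.find_spec hex
    by_cases h0 : Nat.find hex = 0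
    · left; rw [h0] at hm2; simpa using hm2
    · obtain ⟨j, hj⟩ := Nat.exists_eq_succ_of_ne_zero h0
      rw [hj] at hm1 hm2
      right
      refine ⟨T.parent^[j] w, mem_children.mpr ⟨?_, ?_⟩, mem_desc.mpr ⟨j, by omega, rfl⟩⟩
      · intro hroot
        have hx : x = T.root := by
          rw [← hm2, Function.iterate_succ_apply', hroot, T.parent_root]
        exact Nat.find_min hex (by omega : j < Nat.find hex) ⟨by omega, by rw [hroot, hx]⟩
      · rw [Function.iterate_succ_apply'] at hm2; exact hm2
  · rintro (rfl | ⟨y, hy, hw⟩)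
    · exact self_mem_desc w
    · obtain ⟨k, hk, rfl⟩ := mem_desc.mp hw
      have hdy : T.depth (T.parent^[k] w) = T.depth w - k := T.depth_iterate w k hk
      have hdy' : T.depth (T.parent^[k] w) = T.depth x + 1 := depth_of_mem_children hy
      obtain ⟨-, hpar⟩ := mem_children.mp hy
      exact mem_desc.mpr ⟨k + 1, by omega, by rw [Function.iterate_succ_apply', hpar]⟩
lemma desc_disjoint {T : FinRootedTree V} {y1 y2 : V} (hd : T.depth y1 = T.depth y2)
    (hne : y1 ≠ y2) : Disjoint (T.desc y1) (T.desc y2) := by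
  rw [Finset.disjoint_left]
  intro w h1 h2
  obtain ⟨k1, hk1, hw1⟩ := mem_desc.mp h1
  obtain ⟨k2, hk2, hw2⟩ := mem_desc.mp h2
  have e1 := T.depth_iterate w k1 hk1
  have e2 := T.depth_iterate w k2 hk2
  rw [hw1] at e1; rw [hw2] at e2
  have : k1 = k2 := by omega
  exact hne (by rw [← hw1, ← hw2, this])

lemma children_disjoint {T : FinRootedTree V} {x1 x2 : V} (hne : x1 ≠ x2) :
    Disjoint (T.children x1) (T.children x2) := by
  rw [Finset.disjoint_left]
  intro y h1 h2
  obtain ⟨-, e1⟩ := mem_children.mp h1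
  obtain ⟨-, e2⟩ := mem_children.mp h2
  exact hne (by rw [← e1, ← e2])

lemma subtreeCost_eq (T : FinRootedTree V) (c : V → ℝ) (x : V) :
    T.subtreeCost c x = c x + ∑ y ∈ T.children x, T.subtreeCost c y := by
  classical
  rw [subtreeCost, desc_eq]
  have hnot : x ∉ (T.children x).biUnion T.desc := by
    simp only [Finset.mem_biUnion, not_exists]
    rintro y ⟨hy, hx⟩
    have := depth_le_of_mem_desc hx
    have := depth_of_mem_children hy
    omega
  rw [Finset.sum_insert hnot, Finset.sum_biUnion]
  · rfl
  · intro y1 h1 y2 h2 hne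
    exact desc_disjoint (by rw [depth_of_mem_children h1, depth_of_mem_children h2]) hne

lemma forestCost_decomp (T : FinRootedTree V) (c : V → ℝ) (v : Finset V) :
    T.forestCost c v = ∑ x ∈ v, c x + T.forestCost c (T.succs v) := by
  classical
  rw [forestCost, succs, forestCost, Finset.sum_biUnion
    (fun x1 _ x2 _ hne => children_disjoint hne), ← Finset.sum_add_distrib]
  exact Finset.sum_congr rfl fun x _ => T.subtreeCost_eq c x
lemma card_filter_mem_powersetCard (S : Finset V) {a : V} (ha : a ∈ S) (j : ℕ) :
    ((S.powersetCard (j + 1)).filter (fun w => a ∈ w)).card =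
      (S.card - 1).choose j := by
  classical
  have hS : S = insert a (S.erase a) := (Finset.insert_erase ha).symm
  have key : (S.powersetCard (j + 1)).filter (fun w => a ∈ w) =
      ((S.erase a).powersetCard j).image (insert a) := by
    conv_lhs => rw [hS]
    rw [Finset.powersetCard_succ_insert (Finset.notMem_erase a S)]
    ext w
    simp only [Finset.mem_filter, Finset.mem_union, Finset.mem_image]
    constructor
    · rintro ⟨h1 | ⟨t, ht, rfl⟩, h2⟩
      · exact absurd ((Finset.mem_powersetCard.mp h1).1 h2) (Finset.notMem_erase a S)
      · exact ⟨t, ht, rfl⟩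
    · rintro ⟨t, ht, rfl⟩
      exact ⟨Or.inr ⟨t, ht, rfl⟩, Finset.mem_insert_self a t⟩
  rw [key, Finset.card_image_of_injOn, Finset.card_powersetCard, Finset.card_erase_of_mem ha]
  intro t1 h1 t2 h2 he
  have n1 : a ∉ t1 := fun h => Finset.notMem_erase a S ((Finset.mem_powersetCard.mp h1).1 h)
  have n2 : a ∉ t2 := fun h => Finset.notMem_erase a S ((Finset.mem_powersetCard.mp h2).1 h)
  rw [← Finset.erase_insert n1, ← Finset.erase_insert n2, he]

lemma sum_powersetCard_sum (S : Finset V) {k : ℕ} (hk : 1 ≤ k) (f : V → ℝ) :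
    ∑ w ∈ S.powersetCard k, ∑ a ∈ w, f a =
      (((S.card - 1).choose (k - 1) : ℕ) : ℝ) * ∑ a ∈ S, f a := by
  classical
  obtain ⟨j, rfl⟩ : ∃ j, k = j + 1 := ⟨k - 1, by omega⟩
  have step : ∀ w ∈ S.powersetCard (j + 1), ∑ a ∈ w, f a =
      ∑ a ∈ S, if a ∈ w then f a else 0 := by
    intro w hw
    rw [Finset.sum_ite_mem, Finset.inter_eq_right.mpr (Finset.mem_powersetCard.mp hw).1]
  rw [Finset.sum_congr rfl step, Finset.sum_comm]
  rw [Finset.mul_sum]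
  refine Finset.sum_congr rfl fun a ha => ?_
  rw [← Finset.sum_filter, Finset.sum_const, nsmul_eq_mul,
    card_filter_mem_powersetCard S ha j]
  simp
lemma mem_hyper {T : FinRootedTree V} {B : ℕ} {v w : Finset V} (h : w ∈ T.hyper B v) :
    w ⊆ T.succs v ∧ w.card = min B (T.succs v).card :=
  Finset.mem_powersetCard.mp h

lemma hyper_card_pos {T : FinRootedTree V} {B : ℕ} (hB : 1 ≤ B) {v w : Finset V}
    (hS : T.succs v ≠ ∅) (h : w ∈ T.hyper B v) : 0 < w.card := by
  rw [(mem_hyper h).2]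
  have : 0 < (T.succs v).card := Finset.card_pos.mpr (Finset.nonempty_of_ne_empty hS)
  omega

lemma seiE_congr {T : FinRootedTree V} {c : V → ℝ} {B : ℕ} {r : V → ℝ} {fuel : ℕ}
    {v : Finset V} {g h : ℝ → ℝ} (H : ∀ y, g y = h y) :
    seiE T c B r fuel v g = seiE T c B r fuel v h :=
  congrArg _ (funext H)

lemma prob_sum {T : FinRootedTree V} {B : ℕ} {r : V → ℝ} (hr : ∀ x : V, 0 < r x)
    (hB : 1 ≤ B) {v : Finset V} (hS : T.succs v ≠ ∅) :
    ∑ w ∈ T.hyper B v,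
      (∑ a ∈ w, r a) /
        ((∑ a ∈ T.succs v, r a) *
          ((((T.succs v).card - 1).choose (w.card - 1) : ℕ) : ℝ)) = 1 := by
  classical
  have hn : 0 < (T.succs v).card := Finset.card_pos.mpr (Finset.nonempty_of_ne_empty hS)
  have hk : 1 ≤ min B (T.succs v).card := le_min hB hn
  have hC : 0 < ((T.succs v).card - 1).choose (min B (T.succs v).card - 1) :=
    Nat.choose_pos (by omega)
  have hrS : 0 < ∑ a ∈ T.succs v, r a :=
    Finset.sum_pos (fun a _ => hr a) (Finset.nonempty_of_ne_empty hS)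
  have h1 : ∀ w ∈ T.hyper B v,
      (∑ a ∈ w, r a) /
        ((∑ a ∈ T.succs v, r a) *
          ((((T.succs v).card - 1).choose (w.card - 1) : ℕ) : ℝ)) =
      (∑ a ∈ w, r a) /
        ((∑ a ∈ T.succs v, r a) *
          ((((T.succs v).card - 1).choose (min B (T.succs v).card - 1) : ℕ) : ℝ)) := by
    intro w hw
    rw [(mem_hyper hw).2]
  rw [Finset.sum_congr rfl h1, ← Finset.sum_div]
  rw [show T.hyper B v = (T.succs v).powersetCard (min B (T.succs v).card) from rfl]
  rw [sum_powersetCard_sum _ hk]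
  have hC' : (0:ℝ) < (((T.succs v).card - 1).choose (min B (T.succs v).card - 1) : ℕ) := by
    exact_mod_cast hC
  field_simp

lemma seiE_poly {T : FinRootedTree V} {c : V → ℝ} {B : ℕ} {r : V → ℝ}
    (hr : ∀ x : V, 0 < r x) (hB : 1 ≤ B) :
    ∀ (fuel : ℕ) (v : Finset V) (a b d : ℝ),
      seiE T c B r fuel v (fun y => a + b * y + d * y ^ 2) =
        a + b * seiE T c B r fuel v (fun y => y) +
          d * seiE T c B r fuel v (fun y => y ^ 2) := by
  intro fuel
  induction fuel with
  | zero => intro v a b d; simp [seiE]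
  | succ fuel ih =>
    intro v a b d
    by_cases hS : T.succs v = ∅
    · simp [seiE, hS]
    · simp only [seiE, if_neg hS]
      have key : ∀ w ∈ T.hyper B v,
          ((∑ a ∈ w, r a) /
              ((∑ a ∈ T.succs v, r a) *
                ((((T.succs v).card - 1).choose (w.card - 1) : ℕ) : ℝ))) *
            seiE T c B r fuel w (fun y =>
              a + b * ((∑ x ∈ v, c x) / (v.card : ℝ) +
                (w.card : ℝ) / (v.card : ℝ) * ((∑ a ∈ T.succs v, r a) / (∑ a ∈ w, r a)) * y) +
              d * ((∑ x ∈ v, c x) / (v.card : ℝ) +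
                (w.card : ℝ) / (v.card : ℝ) * ((∑ a ∈ T.succs v, r a) / (∑ a ∈ w, r a)) * y) ^ 2) =
          a * ((∑ a ∈ w, r a) /
              ((∑ a ∈ T.succs v, r a) *
                ((((T.succs v).card - 1).choose (w.card - 1) : ℕ) : ℝ))) +
          b * (((∑ a ∈ w, r a) /
              ((∑ a ∈ T.succs v, r a) *
                ((((T.succs v).card - 1).choose (w.card - 1) : ℕ) : ℝ))) *
            seiE T c B r fuel w (fun y =>
              (∑ x ∈ v, c x) / (v.card : ℝ) +
                (w.card : ℝ) / (v.card : ℝ) * ((∑ a ∈ T.succs v, r a) / (∑ a ∈ w, r a)) * y)) +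
          d * (((∑ a ∈ w, r a) /
              ((∑ a ∈ T.succs v, r a) *
                ((((T.succs v).card - 1).choose (w.card - 1) : ℕ) : ℝ))) *
            seiE T c B r fuel w (fun y =>
              ((∑ x ∈ v, c x) / (v.card : ℝ) +
                (w.card : ℝ) / (v.card : ℝ) * ((∑ a ∈ T.succs v, r a) / (∑ a ∈ w, r a)) * y) ^ 2)) := by
        intro w hw
        set cb := (∑ x ∈ v, c x) / (v.card : ℝ) with hcb
        set α := (w.card : ℝ) / (v.card : ℝ) * ((∑ a ∈ T.succs v, r a) / (∑ a ∈ w, r a)) with hα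
        have h1 : seiE T c B r fuel w (fun y => a + b * (cb + α * y) + d * (cb + α * y) ^ 2) =
            (a + b * cb + d * cb ^ 2) + ((b + 2 * d * cb) * α) * seiE T c B r fuel w (fun y => y) +
              (d * α ^ 2) * seiE T c B r fuel w (fun y => y ^ 2) := by
          rw [seiE_congr (fun y => by ring :
            ∀ y : ℝ, a + b * (cb + α * y) + d * (cb + α * y) ^ 2 =
              (a + b * cb + d * cb ^ 2) + ((b + 2 * d * cb) * α) * y + (d * α ^ 2) * y ^ 2)]
          exact ih w _ _ _
        have h2 : seiE T c B r fuel w (fun y => cb + α * y) =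
            cb + α * seiE T c B r fuel w (fun y => y) := by
          rw [seiE_congr (fun y => by ring :
            ∀ y : ℝ, cb + α * y = cb + α * y + 0 * y ^ 2), ih w cb α 0]
          ring
        have h3 : seiE T c B r fuel w (fun y => (cb + α * y) ^ 2) =
            cb ^ 2 + (2 * cb * α) * seiE T c B r fuel w (fun y => y) +
              α ^ 2 * seiE T c B r fuel w (fun y => y ^ 2) := by
          rw [seiE_congr (fun y => by ring :
            ∀ y : ℝ, (cb + α * y) ^ 2 = cb ^ 2 + (2 * cb * α) * y + α ^ 2 * y ^ 2)]
          exact ih w _ _ _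
        rw [h1, h2, h3]
        ring
      rw [Finset.sum_congr rfl key, Finset.sum_add_distrib, Finset.sum_add_distrib,
        ← Finset.mul_sum, ← Finset.mul_sum, ← Finset.mul_sum, prob_sum hr hB hS, mul_one]
lemma seiE_zero {T : FinRootedTree V} {c : V → ℝ} {B : ℕ} {r : V → ℝ} {v : Finset V}
    {g : ℝ → ℝ} : seiE T c B r 0 v g = g ((∑ x ∈ v, c x) / (v.card : ℝ)) := rfl

lemma seiE_succ_empty {T : FinRootedTree V} {c : V → ℝ} {B : ℕ} {r : V → ℝ} {fuel : ℕ}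
    {v : Finset V} {g : ℝ → ℝ} (hS : T.succs v = ∅) :
    seiE T c B r (fuel + 1) v g = g ((∑ x ∈ v, c x) / (v.card : ℝ)) := by
  rw [seiE, if_pos hS]

lemma seiE_succ {T : FinRootedTree V} {c : V → ℝ} {B : ℕ} {r : V → ℝ} {fuel : ℕ}
    {v : Finset V} {g : ℝ → ℝ} (hS : T.succs v ≠ ∅) :
    seiE T c B r (fuel + 1) v g =
      ∑ w ∈ T.hyper B v,
        ((∑ a ∈ w, r a) /
            ((∑ a ∈ T.succs v, r a) *
              ((((T.succs v).card - 1).choose (w.card - 1) : ℕ) : ℝ))) *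
          seiE T c B r fuel w fun y =>
            g ((∑ x ∈ v, c x) / (v.card : ℝ) +
              ((w.card : ℝ) / (v.card : ℝ)) *
                ((∑ a ∈ T.succs v, r a) / (∑ a ∈ w, r a)) * y) := by
  rw [seiE, if_neg hS]

lemma succs_eq_empty_of_depth {T : FinRootedTree V} {v : Finset V}
    (h : ∀ a ∈ v, Fintype.card V ≤ T.depth a + 1) : T.succs v = ∅ := by
  rw [Finset.eq_empty_iff_forall_notMem]
  intro y hy
  obtain ⟨x, hx, hyx⟩ := Finset.mem_biUnion.mp hy
  have h1 := depth_of_mem_children hyx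
  have h2 := T.depth_lt_card y
  have := h x hx
  omega

lemma depth_of_mem_succs {T : FinRootedTree V} {v : Finset V} (hv : T.IsHypernode v)
    {b : V} (hb : b ∈ T.succs v) : ∀ a ∈ v, T.depth b = T.depth a + 1 := by
  intro a ha
  obtain ⟨x, hx, hbx⟩ := Finset.mem_biUnion.mp hb
  rw [depth_of_mem_children hbx, hv.2 x hx a ha]

lemma hypernode_of_mem_hyper {T : FinRootedTree V} {B : ℕ} (hB : 1 ≤ B) {v w : Finset V}
    (hv : T.IsHypernode v) (hS : T.succs v ≠ ∅) (hw : w ∈ T.hyper B v) :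
    T.IsHypernode w := by
  have hne : w.Nonempty := Finset.card_pos.mp (hyper_card_pos hB hS hw)
  refine ⟨hne, fun a ha b hb => ?_⟩
  obtain ⟨a0, ha0⟩ := hv.1
  rw [depth_of_mem_succs hv ((mem_hyper hw).1 ha) a0 ha0,
    depth_of_mem_succs hv ((mem_hyper hw).1 hb) a0 ha0]

lemma forestCost_of_succs_empty {T : FinRootedTree V} {c : V → ℝ} {v : Finset V}
    (hS : T.succs v = ∅) : T.forestCost c v = ∑ x ∈ v, c x := by
  rw [forestCost_decomp, hS]
  simp [forestCost]

lemma seiE_fuel_succ {T : FinRootedTree V} {c : V → ℝ} {B : ℕ} {r : V → ℝ} (hB : 1 ≤ B) :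
    ∀ (fuel : ℕ) (v : Finset V), T.IsHypernode v →
      (∀ a ∈ v, Fintype.card V ≤ fuel + T.depth a + 1) → ∀ g : ℝ → ℝ,
      seiE T c B r (fuel + 1) v g = seiE T c B r fuel v g := by
  intro fuel
  induction fuel with
  | zero =>
    intro v hv hd g
    have hS : T.succs v = ∅ := succs_eq_empty_of_depth fun a ha => by have := hd a ha; omega
    rw [seiE_succ_empty hS, seiE_zero]
  | succ fuel ih =>
    intro v hv hd g
    by_cases hS : T.succs v = ∅
    · rw [seiE_succ_empty hS, seiE_succ_empty hS]
    · rw [seiE_succ hS, seiE_succ hS]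
      refine Finset.sum_congr rfl fun w hw => ?_
      congr 1
      refine ih w (hypernode_of_mem_hyper hB hv hS hw) ?_ _
      · intro b hb
        obtain ⟨a0, ha0⟩ := hv.1
        have := depth_of_mem_succs hv ((mem_hyper hw).1 hb) a0 ha0
        have := hd a0 ha0
        omega
lemma seiE_unbiased {T : FinRootedTree V} {c : V → ℝ} {B : ℕ} {r : V → ℝ}
    (hr : ∀ x : V, 0 < r x) (hB : 1 ≤ B) :
    ∀ (fuel : ℕ) (v : Finset V), T.IsHypernode v →
      (∀ a ∈ v, Fintype.card V ≤ fuel + T.depth a + 1) →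
      seiE T c B r fuel v (fun y => y) = T.forestCost c v / (v.card : ℝ) := by
  intro fuel
  induction fuel with
  | zero =>
    intro v hv hd
    have hS : T.succs v = ∅ := succs_eq_empty_of_depth fun a ha => by have := hd a ha; omega
    rw [seiE_zero, forestCost_of_succs_empty hS]
  | succ fuel ih =>
    intro v hv hd
    by_cases hS : T.succs v = ∅
    · rw [seiE_succ_empty hS, forestCost_of_succs_empty hS]
    · rw [seiE_succ hS]
      have hn : 0 < (T.succs v).card := Finset.card_pos.mpr (Finset.nonempty_of_ne_empty hS)
      have hk : 1 ≤ min B (T.succs v).card := le_min hB hn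
      have hC : 0 < ((T.succs v).card - 1).choose (min B (T.succs v).card - 1) :=
        Nat.choose_pos (by omega)
      have hC' : (0:ℝ) < ((((T.succs v).card - 1).choose (min B (T.succs v).card - 1) : ℕ) : ℝ) := by
        exact_mod_cast hC
      have hrS : 0 < ∑ a ∈ T.succs v, r a :=
        Finset.sum_pos (fun a _ => hr a) (Finset.nonempty_of_ne_empty hS)
      have hvc : (0:ℝ) < (v.card : ℝ) := by
        exact_mod_cast Finset.card_pos.mpr hv.1
      have key : ∀ w ∈ T.hyper B v,
          ((∑ a ∈ w, r a) /
              ((∑ a ∈ T.succs v, r a) *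
                ((((T.succs v).card - 1).choose (w.card - 1) : ℕ) : ℝ))) *
            seiE T c B r fuel w (fun y => (fun y : ℝ => y)
              ((∑ x ∈ v, c x) / (v.card : ℝ) +
                ((w.card : ℝ) / (v.card : ℝ)) *
                  ((∑ a ∈ T.succs v, r a) / (∑ a ∈ w, r a)) * y)) =
          ((∑ x ∈ v, c x) / (v.card : ℝ)) *
            ((∑ a ∈ w, r a) /
              ((∑ a ∈ T.succs v, r a) *
                ((((T.succs v).card - 1).choose (min B (T.succs v).card - 1) : ℕ) : ℝ))) +
          (((((T.succs v).card - 1).choose (min B (T.succs v).card - 1) : ℕ) : ℝ))⁻¹ *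
            ((v.card : ℝ))⁻¹ * T.forestCost c w := by
        intro w hw
        have hwc := (mem_hyper hw).2
        have hwpos : 0 < w.card := hyper_card_pos hB hS hw
        have hwne : w.Nonempty := Finset.card_pos.mp hwpos
        have hrw : 0 < ∑ a ∈ w, r a := Finset.sum_pos (fun a _ => hr a) hwne
        have hwcr : (0:ℝ) < (w.card : ℝ) := by exact_mod_cast hwpos
        have h2 : seiE T c B r fuel w (fun y => (fun y : ℝ => y)
              ((∑ x ∈ v, c x) / (v.card : ℝ) +
                ((w.card : ℝ) / (v.card : ℝ)) *
                  ((∑ a ∈ T.succs v, r a) / (∑ a ∈ w, r a)) * y)) =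
            (∑ x ∈ v, c x) / (v.card : ℝ) +
              ((w.card : ℝ) / (v.card : ℝ)) * ((∑ a ∈ T.succs v, r a) / (∑ a ∈ w, r a)) *
                seiE T c B r fuel w (fun y => y) := by
          rw [seiE_congr (fun y => by
              show (∑ x ∈ v, c x) / (v.card : ℝ) + _ * y = _; ring :
            ∀ y : ℝ, (fun y : ℝ => y)
              ((∑ x ∈ v, c x) / (v.card : ℝ) +
                ((w.card : ℝ) / (v.card : ℝ)) *
                  ((∑ a ∈ T.succs v, r a) / (∑ a ∈ w, r a)) * y) =
              (∑ x ∈ v, c x) / (v.card : ℝ) +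
                ((w.card : ℝ) / (v.card : ℝ)) *
                  ((∑ a ∈ T.succs v, r a) / (∑ a ∈ w, r a)) * y + 0 * y ^ 2),
            seiE_poly hr hB]
          ring
        have hdw : ∀ b ∈ w, Fintype.card V ≤ fuel + T.depth b + 1 := by
          intro b hb
          obtain ⟨a0, ha0⟩ := hv.1
          have := depth_of_mem_succs hv ((mem_hyper hw).1 hb) a0 ha0
          have := hd a0 ha0
          omega
        rw [h2, ih w (hypernode_of_mem_hyper hB hv hS hw) hdw, hwc]
        have n1 := hrS.ne'
        have n2 := hrw.ne'
        have n3 := hC'.ne'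
        have n4 := hvc.ne'
        field_simp
      have hps : ∑ w ∈ T.hyper B v,
          (∑ a ∈ w, r a) /
            ((∑ a ∈ T.succs v, r a) *
              ((((T.succs v).card - 1).choose (min B (T.succs v).card - 1) : ℕ) : ℝ)) = 1 := by
        rw [← Finset.sum_div,
          show T.hyper B v = (T.succs v).powersetCard (min B (T.succs v).card) from rfl,
          sum_powersetCard_sum _ hk]
        field_simp
      rw [Finset.sum_congr rfl key, Finset.sum_add_distrib, ← Finset.mul_sum, ← Finset.mul_sum,
        hps, mul_one]
      have hsum : ∑ w ∈ T.hyper B v, T.forestCost c w =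
          ((((T.succs v).card - 1).choose (min B (T.succs v).card - 1) : ℕ) : ℝ) *
            T.forestCost c (T.succs v) := by
        rw [show T.hyper B v = (T.succs v).powersetCard (min B (T.succs v).card) from rfl]
        exact sum_powersetCard_sum _ hk (T.subtreeCost c)
      rw [hsum]
      conv_rhs => rw [forestCost_decomp]
      field_simp

/-- Paper's Corollary 1: the squared coefficient of variation of the SEI
estimate satisfies
`CV²(|v|·C_SEI(T_v)) = ∑_{w ∈ H(v)} (1/C(|S(v)|-1,|w|-1)) · (r(S(v))/r(w)) ·
(Cost(T_w)/Cost(T_v))² · (CV²(|w|·C_SEI(T_w)) + 1) − (Cost(T_{S(v)})/Cost(T_v))²`. -/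
theorem sei_cv2 (T : FinRootedTree V) (c : V → ℝ) (hc : ∀ x, 0 ≤ c x)
    (B : ℕ) (hB : 1 ≤ B) (r : V → ℝ) (hr : ∀ x : V, 0 < r x)
    (v : Finset V) (hv : T.IsHypernode v) (hS : T.succs v ≠ ∅)
    (hCv : 0 < T.forestCost c v)
    (hCw : ∀ w ∈ T.hyper B v, 0 < T.forestCost c w) :
    seiCV2 T c B r (Fintype.card V) v =
      (∑ w ∈ T.hyper B v,
        (1 / ((((T.succs v).card - 1).choose (w.card - 1) : ℕ) : ℝ)) *
          ((∑ a ∈ T.succs v, r a) / (∑ a ∈ w, r a)) *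
          (T.forestCost c w / T.forestCost c v) ^ 2 *
          (seiCV2 T c B r (Fintype.card V) w + 1)) -
        (T.forestCost c (T.succs v) / T.forestCost c v) ^ 2 := by
  classical
  obtain ⟨a0, ha0⟩ := hv.1
  obtain ⟨M, hM⟩ : ∃ M, Fintype.card V = M + 1 :=
    ⟨Fintype.card V - 1, by have := Fintype.card_pos_iff.mpr ⟨a0⟩; omega⟩
  have hn : 0 < (T.succs v).card := Finset.card_pos.mpr (Finset.nonempty_of_ne_empty hS)
  have hk : 1 ≤ min B (T.succs v).card := le_min hB hn
  have hC : 0 < ((T.succs v).card - 1).choose (min B (T.succs v).card - 1) :=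
    Nat.choose_pos (by omega)
  have hC' : (0:ℝ) < ((((T.succs v).card - 1).choose (min B (T.succs v).card - 1) : ℕ) : ℝ) := by
    exact_mod_cast hC
  have hrS : 0 < ∑ a ∈ T.succs v, r a :=
    Finset.sum_pos (fun a _ => hr a) (Finset.nonempty_of_ne_empty hS)
  have hvc : (0:ℝ) < (v.card : ℝ) := by exact_mod_cast Finset.card_pos.mpr hv.1
  have E1v : seiE T c B r (Fintype.card V) v (fun y => (v.card : ℝ) * y) =
      T.forestCost c v := by
    rw [seiE_congr (fun y => by ring :
        ∀ y : ℝ, (v.card : ℝ) * y = 0 + (v.card : ℝ) * y + 0 * y ^ 2),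
      seiE_poly hr hB, seiE_unbiased hr hB _ v hv (fun a ha => by omega)]
    field_simp
    ring
  have hps : ∑ w ∈ T.hyper B v,
      (∑ a ∈ w, r a) /
        ((∑ a ∈ T.succs v, r a) *
          ((((T.succs v).card - 1).choose (min B (T.succs v).card - 1) : ℕ) : ℝ)) = 1 := by
    rw [← Finset.sum_div,
      show T.hyper B v = (T.succs v).powersetCard (min B (T.succs v).card) from rfl,
      sum_powersetCard_sum _ hk]
    field_simp
  have hsum : ∑ w ∈ T.hyper B v, T.forestCost c w =
      ((((T.succs v).card - 1).choose (min B (T.succs v).card - 1) : ℕ) : ℝ) *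
        T.forestCost c (T.succs v) := by
    rw [show T.hyper B v = (T.succs v).powersetCard (min B (T.succs v).card) from rfl]
    exact sum_powersetCard_sum _ hk (T.subtreeCost c)
  have key : ∀ w ∈ T.hyper B v,
      ((∑ a ∈ w, r a) /
          ((∑ a ∈ T.succs v, r a) *
            ((((T.succs v).card - 1).choose (w.card - 1) : ℕ) : ℝ))) *
        seiE T c B r M w (fun y => (fun y : ℝ => ((v.card : ℝ) * y) ^ 2)
          ((∑ x ∈ v, c x) / (v.card : ℝ) +
            ((w.card : ℝ) / (v.card : ℝ)) *
              ((∑ a ∈ T.succs v, r a) / (∑ a ∈ w, r a)) * y)) =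
      (∑ x ∈ v, c x) ^ 2 *
          ((∑ a ∈ w, r a) /
            ((∑ a ∈ T.succs v, r a) *
              ((((T.succs v).card - 1).choose (min B (T.succs v).card - 1) : ℕ) : ℝ))) +
        2 * (∑ x ∈ v, c x) *
            (((((T.succs v).card - 1).choose (min B (T.succs v).card - 1) : ℕ) : ℝ))⁻¹ *
          T.forestCost c w +
        (1 / ((((T.succs v).card - 1).choose (w.card - 1) : ℕ) : ℝ)) *
          ((∑ a ∈ T.succs v, r a) / (∑ a ∈ w, r a)) *
          (T.forestCost c w) ^ 2 * (seiCV2 T c B r (Fintype.card V) w + 1) := by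
    intro w hw
    have hwc := (mem_hyper hw).2
    have hwpos : 0 < w.card := hyper_card_pos hB hS hw
    have hwne : w.Nonempty := Finset.card_pos.mp hwpos
    have hrw : 0 < ∑ a ∈ w, r a := Finset.sum_pos (fun a _ => hr a) hwne
    have hwcr : (0:ℝ) < (w.card : ℝ) := by exact_mod_cast hwpos
    have hhw := hypernode_of_mem_hyper hB hv hS hw
    have hdM : ∀ b ∈ w, Fintype.card V ≤ M + T.depth b + 1 := fun b hb => by omega
    have e1 : seiE T c B r M w (fun y => y) = T.forestCost c w / (w.card : ℝ) :=
      seiE_unbiased hr hB M w hhw hdM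
    have efs : ∀ g : ℝ → ℝ, seiE T c B r (M + 1) w g = seiE T c B r M w g :=
      seiE_fuel_succ hB M w hhw hdM
    have eA : seiE T c B r (Fintype.card V) w (fun y => ((w.card : ℝ) * y) ^ 2) =
        (w.card : ℝ) ^ 2 * seiE T c B r M w (fun y => y ^ 2) := by
      rw [hM, efs, seiE_congr (fun y => by ring :
          ∀ y : ℝ, ((w.card : ℝ) * y) ^ 2 = 0 + 0 * y + (w.card : ℝ) ^ 2 * y ^ 2),
        seiE_poly hr hB]
      ring
    have eB : seiE T c B r (Fintype.card V) w (fun y => (w.card : ℝ) * y) =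
        T.forestCost c w := by
      rw [hM, efs, seiE_congr (fun y => by ring :
          ∀ y : ℝ, (w.card : ℝ) * y = 0 + (w.card : ℝ) * y + 0 * y ^ 2),
        seiE_poly hr hB, e1]
      field_simp
      ring
    have hQ : seiE T c B r M w (fun y => y ^ 2) =
        (seiCV2 T c B r (Fintype.card V) w + 1) * (T.forestCost c w) ^ 2 /
          (w.card : ℝ) ^ 2 := by
      rw [seiCV2, seiVar, eA, eB]
      have := (hCw w hw).ne'
      field_simp
      ring
    rw [seiE_congr (fun y => by
        show ((v.card : ℝ) * ((∑ x ∈ v, c x) / (v.card : ℝ) +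
          ((w.card : ℝ) / (v.card : ℝ)) *
            ((∑ a ∈ T.succs v, r a) / (∑ a ∈ w, r a)) * y)) ^ 2 = _
        ring :
      ∀ y : ℝ, (fun y : ℝ => ((v.card : ℝ) * y) ^ 2)
          ((∑ x ∈ v, c x) / (v.card : ℝ) +
            ((w.card : ℝ) / (v.card : ℝ)) *
              ((∑ a ∈ T.succs v, r a) / (∑ a ∈ w, r a)) * y) =
        ((v.card : ℝ) * ((∑ x ∈ v, c x) / (v.card : ℝ))) ^ 2 +
          (2 * ((v.card : ℝ) * ((∑ x ∈ v, c x) / (v.card : ℝ))) *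
            ((v.card : ℝ) * (((w.card : ℝ) / (v.card : ℝ)) *
              ((∑ a ∈ T.succs v, r a) / (∑ a ∈ w, r a))))) * y +
          ((v.card : ℝ) * (((w.card : ℝ) / (v.card : ℝ)) *
            ((∑ a ∈ T.succs v, r a) / (∑ a ∈ w, r a)))) ^ 2 * y ^ 2),
      seiE_poly hr hB, e1, hQ, hwc]
    have n1 := hrS.ne'
    have n2 := hrw.ne'
    have n3 := hC'.ne'
    have n4 := hvc.ne'
    have n5 := hwcr.ne'
    field_simp
  have hE2 : seiE T c B r (Fintype.card V) v (fun y => ((v.card : ℝ) * y) ^ 2) =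
      (∑ x ∈ v, c x) ^ 2 + 2 * (∑ x ∈ v, c x) * T.forestCost c (T.succs v) +
        ∑ w ∈ T.hyper B v,
          (1 / ((((T.succs v).card - 1).choose (w.card - 1) : ℕ) : ℝ)) *
            ((∑ a ∈ T.succs v, r a) / (∑ a ∈ w, r a)) *
            (T.forestCost c w) ^ 2 * (seiCV2 T c B r (Fintype.card V) w + 1) := by
    conv_lhs => rw [hM]
    rw [seiE_succ hS, Finset.sum_congr rfl key, Finset.sum_add_distrib,
      Finset.sum_add_distrib, ← Finset.mul_sum, ← Finset.mul_sum, hps, hsum, mul_one]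
    congr 1
    congr 1
    field_simp
  rw [seiCV2, seiVar, E1v, hE2]
  have hsplit : ∑ w ∈ T.hyper B v,
      (1 / ((((T.succs v).card - 1).choose (w.card - 1) : ℕ) : ℝ)) *
        ((∑ a ∈ T.succs v, r a) / (∑ a ∈ w, r a)) *
        (T.forestCost c w / T.forestCost c v) ^ 2 *
        (seiCV2 T c B r (Fintype.card V) w + 1) =
      (∑ w ∈ T.hyper B v,
        (1 / ((((T.succs v).card - 1).choose (w.card - 1) : ℕ) : ℝ)) *
          ((∑ a ∈ T.succs v, r a) / (∑ a ∈ w, r a)) *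
          (T.forestCost c w) ^ 2 * (seiCV2 T c B r (Fintype.card V) w + 1)) /
        (T.forestCost c v) ^ 2 := by
    rw [Finset.sum_div]
    exact Finset.sum_congr rfl fun w hw => by ring
  rw [hsplit]
  have hd : T.forestCost c v = ∑ x ∈ v, c x + T.forestCost c (T.succs v) :=
    forestCost_decomp T c v
  rw [hd] at hCv ⊢
  have := hCv.ne'
  field_simp
  ring

end FinRootedTree
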